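/- Let A be an invertible n×n real matrix that is K-quasiconformal, i.e., |A|^n ≤ K|det A| and |det A| ≤ K l(A)^n, where |A| and l(A) are the maximal and minimal singular values. Then for any n−1 vectors x_1,…,x_{n−1} ∈ ℝ^n: K^{1−n}|A|^{n−1}|x_1 ∧ ⋯ ∧ x_{n−1}| ≤ |Ax_1 ∧ ⋯ ∧ Ax_{n−1}| ≤ |A|^{n−1}|x_1 ∧ ⋯ ∧ x_{n−1}|, where |x_1 ∧ ⋯ ∧ x_{n−1}| denotes the norm of the (n−1)-dimensional cross product (the volume of the parallelepiped spanned). -/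

import Mathlib

noncomputable section

open Matrix

lemma inner_mulVec_self (m : ℕ) (A : Matrix (Fin m) (Fin m) ℝ) (ζ : EuclideanSpace ℝ (Fin m)) :
    (inner ℝ ζ ((WithLp.equiv 2 (Fin m → ℝ)).symm ((Aᴴ * A).mulVec (ζ : Fin m → ℝ))) : ℝ)
      = ‖(WithLp.equiv 2 (Fin m → ℝ)).symm (A.mulVec (ζ : Fin m → ℝ))‖ ^ 2 := by
  rw [← real_inner_self_eq_norm_sq]
  rw [EuclideanSpace.inner_eq_star_dotProduct, EuclideanSpace.inner_eq_star_dotProduct]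
  show dotProduct ((Aᴴ * A).mulVec ζ) (ζ : Fin m → ℝ) = dotProduct (A.mulVec ζ) (A.mulVec ζ)
  rw [dotProduct_comm]
  rw [← Matrix.mulVec_mulVec, Matrix.dotProduct_mulVec, Matrix.conjTranspose_eq_transpose_of_trivial,
    Matrix.vecMul_transpose]

-- Rayleigh decomposition: ⟪ζ, M ζ⟫ = ∑ μ i * ⟪ζ, b i⟫ ^ 2
lemma rayleigh (m : ℕ) (M : Matrix (Fin m) (Fin m) ℝ) (hM : M.IsHermitian)
    (ζ : EuclideanSpace ℝ (Fin m)) :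
    (inner ℝ ζ ((WithLp.equiv 2 (Fin m → ℝ)).symm (M.mulVec (ζ : Fin m → ℝ))) : ℝ)
      = ∑ i, hM.eigenvalues i * (inner ℝ ζ (hM.eigenvectorBasis i) : ℝ) ^ 2 := by
  set b := hM.eigenvectorBasis
  have h := b.sum_inner_mul_inner ζ ((WithLp.equiv 2 (Fin m → ℝ)).symm (M.mulVec (ζ : Fin m → ℝ)))
  rw [← h]
  refine Finset.sum_congr rfl fun i _ => ?_
  have hbi : (inner ℝ (b i) ((WithLp.equiv 2 (Fin m → ℝ)).symm (M.mulVec (ζ : Fin m → ℝ))) : ℝ)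
      = hM.eigenvalues i * (inner ℝ (b i) ζ : ℝ) := by
    rw [EuclideanSpace.inner_eq_star_dotProduct, EuclideanSpace.inner_eq_star_dotProduct]
    show dotProduct (M.mulVec ζ) (b i : Fin m → ℝ) = hM.eigenvalues i * dotProduct (ζ : Fin m → ℝ) (b i : Fin m → ℝ)
    rw [dotProduct_comm, dotProduct_comm (ζ : Fin m → ℝ)]
    rw [Matrix.dotProduct_mulVec]
    have : (b i : Fin m → ℝ) ᵥ* M = hM.eigenvalues i • (b i : Fin m → ℝ) := by
      have := hM.mulVec_eigenvectorBasis i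
      rw [← Matrix.mulVec_transpose]
      rw [show Mᵀ = M from by rw [← Matrix.conjTranspose_eq_transpose_of_trivial]; exact hM]
      exact this
    rw [this, smul_dotProduct, smul_eq_mul]
  rw [hbi, real_inner_comm ζ (b i)]
  ring

lemma det_le_aux (m : ℕ) (A : Matrix (Fin (m+1)) (Fin (m+1)) ℝ) (l : ℝ)
    (hl : l = ⨅ ζ : {ζ : EuclideanSpace ℝ (Fin (m + 1)) // ‖ζ‖ = 1},
        ‖(WithLp.equiv 2 (Fin (m + 1) → ℝ)).symm (A.mulVec (ζ : Fin (m + 1) → ℝ))‖) :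
    |A.det| ≤ l * ‖Matrix.toEuclideanCLM (𝕜 := ℝ) A‖ ^ m := by
  set O := ‖Matrix.toEuclideanCLM (𝕜 := ℝ) A‖ with hO
  have hOnn : 0 ≤ O := norm_nonneg _
  have hAnorm : ∀ ζ : EuclideanSpace ℝ (Fin (m+1)),
      ‖(WithLp.equiv 2 (Fin (m + 1) → ℝ)).symm (A.mulVec (ζ : Fin (m + 1) → ℝ))‖ ≤ O * ‖ζ‖ := by
    intro ζ
    have := (Matrix.toEuclideanCLM (𝕜 := ℝ) A).le_opNorm ζ
    exact this
  have hlnn : 0 ≤ l := by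
    rw [hl]
    exact Real.iInf_nonneg fun ζ => norm_nonneg _
  set Mx := Aᴴ * A with hMx
  have hPSD : Mx.PosSemidef := Matrix.posSemidef_conjTranspose_mul_self A
  have hM : Mx.IsHermitian := hPSD.1
  set μ := hM.eigenvalues with hμ
  set b := hM.eigenvectorBasis with hb
  have hμnn : ∀ i, 0 ≤ μ i := hPSD.eigenvalues_nonneg
  -- each eigenvalue ≤ O^2
  have hμle : ∀ i, μ i ≤ O ^ 2 := by
    intro i
    have hbnorm : ‖b i‖ = 1 := b.orthonormal.1 i
    have h1 : (inner ℝ (b i) ((WithLp.equiv 2 (Fin (m+1) → ℝ)).symm (Mx.mulVec ((b i) : Fin (m+1) → ℝ))) : ℝ) = μ i := by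
      rw [rayleigh (m+1) Mx hM (b i)]
      rw [Finset.sum_eq_single i]
      · rw [real_inner_self_eq_norm_sq, hbnorm]; norm_num; rfl
      · intro j _ hj
        rw [b.orthonormal.2 (Ne.symm hj)]
        ring
      · intro h; exact absurd (Finset.mem_univ i) h
    have h2 := inner_mulVec_self (m+1) A (b i)
    rw [h1] at h2
    have h3 := hAnorm (b i)
    rw [hbnorm, mul_one] at h3
    calc μ i = _ := h2
    _ ≤ O ^ 2 := by
        have := norm_nonneg ((WithLp.equiv 2 (Fin (m+1) → ℝ)).symm (A.mulVec ((b i) : Fin (m+1) → ℝ)))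
        nlinarith
  -- min eigenvalue ≤ l^2
  obtain ⟨j, -, hj⟩ := Finset.exists_min_image Finset.univ μ ⟨0, Finset.mem_univ 0⟩
  have hμj : μ j ≤ l ^ 2 := by
    have key : ∀ ζ : {ζ : EuclideanSpace ℝ (Fin (m + 1)) // ‖ζ‖ = 1},
        Real.sqrt (μ j) ≤ ‖(WithLp.equiv 2 (Fin (m + 1) → ℝ)).symm (A.mulVec ((ζ : EuclideanSpace ℝ (Fin (m+1))) : Fin (m + 1) → ℝ))‖ := by
      rintro ⟨ζ, hζ⟩
      have h2 := inner_mulVec_self (m+1) A ζ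
      have h1 := rayleigh (m+1) Mx hM ζ
      rw [h2] at h1
      have hpar : ∑ i, (inner ℝ ζ (b i) : ℝ) ^ 2 = 1 := by
        have hps := b.sum_inner_mul_inner ζ ζ
        rw [real_inner_self_eq_norm_sq, hζ] at hps
        calc ∑ i, (inner ℝ ζ (b i) : ℝ) ^ 2 = ∑ i, (inner ℝ ζ (b i) : ℝ) * (inner ℝ (b i) ζ : ℝ) := by
              refine Finset.sum_congr rfl fun i _ => ?_
              rw [real_inner_comm (b i) ζ]; ring
        _ = 1 := by rw [hps]; norm_num
      have hge : μ j ≤ ‖(WithLp.equiv 2 (Fin (m + 1) → ℝ)).symm (A.mulVec (ζ : Fin (m + 1) → ℝ))‖ ^ 2 := by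
        rw [h1]
        calc μ j = μ j * ∑ i, (inner ℝ ζ (b i) : ℝ) ^ 2 := by rw [hpar, mul_one]
        _ = ∑ i, μ j * (inner ℝ ζ (b i) : ℝ) ^ 2 := Finset.mul_sum _ _ _
        _ ≤ ∑ i, μ i * (inner ℝ ζ (b i) : ℝ) ^ 2 := by
            refine Finset.sum_le_sum fun i _ => ?_
            exact mul_le_mul_of_nonneg_right (hj i (Finset.mem_univ i)) (sq_nonneg _)
      calc Real.sqrt (μ j) ≤ Real.sqrt (‖(WithLp.equiv 2 (Fin (m + 1) → ℝ)).symm (A.mulVec (ζ : Fin (m + 1) → ℝ))‖ ^ 2) := Real.sqrt_le_sqrt hge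
      _ = _ := Real.sqrt_sq (norm_nonneg _)
    have : Nonempty {ζ : EuclideanSpace ℝ (Fin (m + 1)) // ‖ζ‖ = 1} :=
      ⟨⟨EuclideanSpace.single 0 1, by simp [EuclideanSpace.norm_single]⟩⟩
    have hsle : Real.sqrt (μ j) ≤ l := by
      rw [hl]
      exact le_ciInf key
    calc μ j = Real.sqrt (μ j) ^ 2 := (Real.sq_sqrt (hμnn j)).symm
    _ ≤ l ^ 2 := by nlinarith [Real.sqrt_nonneg (μ j)]
  -- product formula
  have hMdet : Mx.det = A.det ^ 2 := by
    rw [hMx, Matrix.det_mul, Matrix.conjTranspose_eq_transpose_of_trivial, Matrix.det_transpose, sq]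
  have hdet2 : A.det ^ 2 = ∏ i, μ i := by
    rw [← hMdet]
    simpa using hM.det_eq_prod_eigenvalues
  have hprod : ∏ i, μ i ≤ l ^ 2 * (O ^ 2) ^ m := by
    rw [← Finset.mul_prod_erase Finset.univ μ (Finset.mem_univ j)]
    have hcard : (Finset.univ.erase j).card = m := by
      rw [Finset.card_erase_of_mem (Finset.mem_univ j), Finset.card_univ]
      simp
    calc μ j * ∏ i ∈ Finset.univ.erase j, μ i
        ≤ l ^ 2 * ∏ i ∈ Finset.univ.erase j, O ^ 2 := by
          refine mul_le_mul hμj ?_ (Finset.prod_nonneg fun i _ => hμnn i) (by positivity)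
          exact Finset.prod_le_prod (fun i _ => hμnn i) (fun i _ => hμle i)
    _ = l ^ 2 * (O ^ 2) ^ m := by rw [Finset.prod_const, hcard]
  have hfin : A.det ^ 2 ≤ (l * O ^ m) ^ 2 := by
    rw [hdet2]
    calc ∏ i, μ i ≤ l ^ 2 * (O ^ 2) ^ m := hprod
    _ = (l * O ^ m) ^ 2 := by ring
  have hsq : |A.det| ^ 2 ≤ (l * O ^ m) ^ 2 := by rwa [sq_abs]
  nlinarith [abs_nonneg A.det, mul_nonneg hlnn (pow_nonneg hOnn m)]

-- l * ‖w‖ ≤ ‖A w‖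
lemma l_mul_le (m : ℕ) (A : Matrix (Fin (m+1)) (Fin (m+1)) ℝ) (l : ℝ)
    (hl : l = ⨅ ζ : {ζ : EuclideanSpace ℝ (Fin (m + 1)) // ‖ζ‖ = 1},
        ‖(WithLp.equiv 2 (Fin (m + 1) → ℝ)).symm (A.mulVec (ζ : Fin (m + 1) → ℝ))‖)
    (w : EuclideanSpace ℝ (Fin (m+1))) :
    l * ‖w‖ ≤ ‖(WithLp.equiv 2 (Fin (m + 1) → ℝ)).symm (A.mulVec (w : Fin (m + 1) → ℝ))‖ := by
  rcases eq_or_ne w 0 with rfl | hw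
  · have : A.mulVec ((0 : EuclideanSpace ℝ (Fin (m+1))) : Fin (m+1) → ℝ) = 0 := by
      show A.mulVec 0 = 0
      exact Matrix.mulVec_zero A
    rw [this]
    simp
  · have ha : (0:ℝ) < ‖w‖ := norm_pos_iff.mpr hw
    set ζ : EuclideanSpace ℝ (Fin (m+1)) := ‖w‖⁻¹ • w with hζdef
    have hζ : ‖ζ‖ = 1 := by
      rw [hζdef, norm_smul, norm_inv, norm_norm, inv_mul_cancel₀ ha.ne']
    have hbdd : BddBelow (Set.range fun ζ : {ζ : EuclideanSpace ℝ (Fin (m + 1)) // ‖ζ‖ = 1} =>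
        ‖(WithLp.equiv 2 (Fin (m + 1) → ℝ)).symm (A.mulVec (ζ : Fin (m + 1) → ℝ))‖) := by
      refine ⟨0, ?_⟩
      rintro y ⟨ζ', rfl⟩
      exact norm_nonneg _
    have hle : l ≤ ‖(WithLp.equiv 2 (Fin (m + 1) → ℝ)).symm (A.mulVec (ζ : Fin (m + 1) → ℝ))‖ := by
      rw [hl]
      exact ciInf_le hbdd ⟨ζ, hζ⟩
    have hcoe : (ζ : Fin (m+1) → ℝ) = ‖w‖⁻¹ • (w : Fin (m+1) → ℝ) := rfl
    rw [hcoe, Matrix.mulVec_smul] at hle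
    have hsm : (WithLp.equiv 2 (Fin (m + 1) → ℝ)).symm (‖w‖⁻¹ • A.mulVec (w : Fin (m+1) → ℝ))
        = ‖w‖⁻¹ • (WithLp.equiv 2 (Fin (m + 1) → ℝ)).symm (A.mulVec (w : Fin (m+1) → ℝ)) := rfl
    rw [hsm, norm_smul, norm_inv, norm_norm] at hle
    calc l * ‖w‖ ≤ (‖w‖⁻¹ * ‖(WithLp.equiv 2 (Fin (m + 1) → ℝ)).symm (A.mulVec (w : Fin (m+1) → ℝ))‖) * ‖w‖ :=
          mul_le_mul_of_nonneg_right hle ha.le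
    _ = _ := by field_simp

-- key transformation identity
lemma star_id (n : ℕ) (A : Matrix (Fin (n + 1)) (Fin (n + 1)) ℝ)
    (x : Fin n → EuclideanSpace ℝ (Fin (n + 1)))
    (c c' : EuclideanSpace ℝ (Fin (n + 1)))
    (hc : ∀ v : EuclideanSpace ℝ (Fin (n + 1)), (inner ℝ c v : ℝ) =
      (Matrix.of (Fin.snoc (fun i => (x i : Fin (n + 1) → ℝ)) (v : Fin (n + 1) → ℝ))).det)
    (hc' : ∀ v : EuclideanSpace ℝ (Fin (n + 1)), (inner ℝ c' v : ℝ) =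
      (Matrix.of (Fin.snoc (fun i => A.mulVec (x i : Fin (n + 1) → ℝ))
        (v : Fin (n + 1) → ℝ))).det)
    (w : EuclideanSpace ℝ (Fin (n + 1))) :
    (inner ℝ c' ((WithLp.equiv 2 (Fin (n + 1) → ℝ)).symm (A.mulVec (w : Fin (n + 1) → ℝ))) : ℝ)
      = A.det * (inner ℝ c w : ℝ) := by
  rw [hc', hc]
  have hmat : Matrix.of (Fin.snoc (fun i => A.mulVec (x i : Fin (n + 1) → ℝ))
        (((WithLp.equiv 2 (Fin (n + 1) → ℝ)).symm (A.mulVec (w : Fin (n + 1) → ℝ))) : Fin (n+1) → ℝ))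
      = Matrix.of (Fin.snoc (fun i => (x i : Fin (n + 1) → ℝ)) (w : Fin (n + 1) → ℝ)) * Aᵀ := by
    ext i j
    simp only [Matrix.of_apply, Matrix.mul_apply, Matrix.transpose_apply]
    refine Fin.lastCases ?_ (fun i' => ?_) i
    · rw [Fin.snoc_last, Fin.snoc_last]
      show A.mulVec (w : Fin (n+1) → ℝ) j = _
      rw [Matrix.mulVec, dotProduct]
      exact Finset.sum_congr rfl fun k _ => mul_comm _ _
    · rw [Fin.snoc_castSucc, Fin.snoc_castSucc]
      rw [Matrix.mulVec, dotProduct]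
      exact Finset.sum_congr rfl fun k _ => mul_comm _ _
  rw [hmat, Matrix.det_mul, Matrix.det_transpose, mul_comm]

theorem cross_product_distortion (n : ℕ) (hn : 1 ≤ n) (K : ℝ) (hK : 1 ≤ K)
    (A : Matrix (Fin (n + 1)) (Fin (n + 1)) ℝ) (hA : IsUnit A.det)
    (l : ℝ)
    (hl : l = ⨅ ζ : {ζ : EuclideanSpace ℝ (Fin (n + 1)) // ‖ζ‖ = 1},
        ‖(WithLp.equiv 2 (Fin (n + 1) → ℝ)).symm (A.mulVec (ζ : Fin (n + 1) → ℝ))‖)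
    (hqc1 : ‖Matrix.toEuclideanCLM (𝕜 := ℝ) A‖ ^ (n + 1) ≤ K * |A.det|)
    (hqc2 : |A.det| ≤ K * l ^ (n + 1))
    (x : Fin n → EuclideanSpace ℝ (Fin (n + 1)))
    (c c' : EuclideanSpace ℝ (Fin (n + 1)))
    (hc : ∀ v : EuclideanSpace ℝ (Fin (n + 1)), (inner ℝ c v : ℝ) =
      (Matrix.of (Fin.snoc (fun i => (x i : Fin (n + 1) → ℝ)) (v : Fin (n + 1) → ℝ))).det)
    (hc' : ∀ v : EuclideanSpace ℝ (Fin (n + 1)), (inner ℝ c' v : ℝ) =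
      (Matrix.of (Fin.snoc (fun i => A.mulVec (x i : Fin (n + 1) → ℝ))
        (v : Fin (n + 1) → ℝ))).det) :
    K ^ ((1 : ℝ) - (n + 1)) * ‖Matrix.toEuclideanCLM (𝕜 := ℝ) A‖ ^ n * ‖c‖ ≤ ‖c'‖ ∧
      ‖c'‖ ≤ ‖Matrix.toEuclideanCLM (𝕜 := ℝ) A‖ ^ n * ‖c‖ := by
  set O := ‖Matrix.toEuclideanCLM (𝕜 := ℝ) A‖ with hO
  have hOnn : 0 ≤ O := norm_nonneg _
  have hlnn : 0 ≤ l := by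
    rw [hl]; exact Real.iInf_nonneg fun ζ => norm_nonneg _
  have hKpos : (0:ℝ) < K := lt_of_lt_of_le one_pos hK
  have hdetpos : 0 < |A.det| := abs_pos.mpr (by
    intro h0; rw [h0] at hA; exact (by simpa using hA : IsUnit (0:ℝ)).ne_zero rfl)
  have haux : |A.det| ≤ l * O ^ n := det_le_aux n A l hl
  have hlO : 0 < l * O ^ n := lt_of_lt_of_le hdetpos haux
  have hlpos : 0 < l := by nlinarith [pow_nonneg hOnn n]
  have hOn : 0 < O ^ n := by nlinarith
  have hOpos : 0 < O := by
    rcases hOnn.lt_or_eq with h | h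
    · exact h
    · exfalso; rw [← h, zero_pow (by omega : n ≠ 0)] at hOn; exact lt_irrefl 0 hOn
  have hstar := star_id n A x c c' hc hc'
  have hAop : ∀ v : EuclideanSpace ℝ (Fin (n+1)),
      ‖(WithLp.equiv 2 (Fin (n + 1) → ℝ)).symm (A.mulVec (v : Fin (n + 1) → ℝ))‖ ≤ O * ‖v‖ :=
    fun v => (Matrix.toEuclideanCLM (𝕜 := ℝ) A).le_opNorm v
  -- lower estimate |det A| * ‖c‖ ≤ O * ‖c'‖
  have hlow : |A.det| * ‖c‖ ≤ O * ‖c'‖ := by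
    rcases eq_or_ne c 0 with rfl | hc0
    · simp only [norm_zero, mul_zero]; positivity
    · have h1 := hstar c
      have h2 : |A.det| * ‖c‖ ^ 2
          = |(inner ℝ c' ((WithLp.equiv 2 (Fin (n + 1) → ℝ)).symm (A.mulVec (c : Fin (n + 1) → ℝ))) : ℝ)| := by
        rw [h1, abs_mul]
        congr 1
        rw [real_inner_self_eq_norm_sq]
        exact (abs_of_nonneg (sq_nonneg _)).symm
      have h3 : |(inner ℝ c' ((WithLp.equiv 2 (Fin (n + 1) → ℝ)).symm (A.mulVec (c : Fin (n + 1) → ℝ))) : ℝ)|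
          ≤ ‖c'‖ * (O * ‖c‖) := by
        refine (abs_real_inner_le_norm _ _).trans ?_
        exact mul_le_mul_of_nonneg_left (hAop c) (norm_nonneg c')
      have hcpos : 0 < ‖c‖ := norm_pos_iff.mpr hc0
      nlinarith [h2, h3]
  constructor
  · -- lower bound
    have hrw : K ^ ((1 : ℝ) - (n + 1)) = (K ^ n)⁻¹ := by
      rw [show (1 : ℝ) - ((n : ℝ) + 1) = -(n : ℝ) by ring, Real.rpow_neg hKpos.le,
        Real.rpow_natCast]
    rw [hrw, mul_assoc, inv_mul_le_iff₀ (pow_pos hKpos n)]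
    have step : O ^ n * ‖c‖ ≤ K * ‖c'‖ := by
      have h4 : O ^ (n+1) * ‖c‖ ≤ K * (O * ‖c'‖) :=
        calc O ^ (n+1) * ‖c‖ ≤ (K * |A.det|) * ‖c‖ :=
              mul_le_mul_of_nonneg_right hqc1 (norm_nonneg c)
        _ = K * (|A.det| * ‖c‖) := by ring
        _ ≤ K * (O * ‖c'‖) := mul_le_mul_of_nonneg_left hlow hKpos.le
      have h4' : (O ^ n * ‖c‖) * O ≤ (K * ‖c'‖) * O := by
        calc (O ^ n * ‖c‖) * O = O ^ (n+1) * ‖c‖ := by rw [pow_succ]; ring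
        _ ≤ K * (O * ‖c'‖) := h4
        _ = (K * ‖c'‖) * O := by ring
      exact le_of_mul_le_mul_right h4' hOpos
    calc O ^ n * ‖c‖ ≤ K * ‖c'‖ := step
    _ ≤ K ^ n * ‖c'‖ := by
        refine mul_le_mul_of_nonneg_right ?_ (norm_nonneg _)
        calc K = K ^ 1 := (pow_one K).symm
        _ ≤ K ^ n := pow_le_pow_right₀ hK hn
  · -- upper bound
    rcases eq_or_ne c' 0 with rfl | hc'0
    · simp only [norm_zero]; positivity
    · have harg : (WithLp.equiv 2 (Fin (n + 1) → ℝ)).symm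
          (A.mulVec (((WithLp.equiv 2 (Fin (n + 1) → ℝ)).symm ((A⁻¹).mulVec (c' : Fin (n + 1) → ℝ))
            : EuclideanSpace ℝ (Fin (n+1))) : Fin (n + 1) → ℝ)) = c' := by
        show (WithLp.equiv 2 (Fin (n + 1) → ℝ)).symm
            (A.mulVec ((A⁻¹).mulVec (c' : Fin (n + 1) → ℝ))) = c'
        rw [Matrix.mulVec_mulVec, Matrix.mul_nonsing_inv A hA, Matrix.one_mulVec]
        rfl
      have h := hstar ((WithLp.equiv 2 (Fin (n + 1) → ℝ)).symm ((A⁻¹).mulVec (c' : Fin (n + 1) → ℝ)))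
      rw [harg, real_inner_self_eq_norm_sq] at h
      have h6 : ‖c'‖ ^ 2 ≤ |A.det| * (‖c‖ *
          ‖(WithLp.equiv 2 (Fin (n + 1) → ℝ)).symm ((A⁻¹).mulVec (c' : Fin (n + 1) → ℝ))‖) := by
        calc ‖c'‖ ^ 2 = |A.det * (inner ℝ c ((WithLp.equiv 2 (Fin (n + 1) → ℝ)).symm ((A⁻¹).mulVec (c' : Fin (n + 1) → ℝ))) : ℝ)| := by
              rw [← h]
              exact (abs_of_nonneg (sq_nonneg _)).symm
        _ = |A.det| * |(inner ℝ c ((WithLp.equiv 2 (Fin (n + 1) → ℝ)).symm ((A⁻¹).mulVec (c' : Fin (n + 1) → ℝ))) : ℝ)| := abs_mul _ _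
        _ ≤ _ := mul_le_mul_of_nonneg_left (abs_real_inner_le_norm _ _) (abs_nonneg _)
      have h7 : l * ‖(WithLp.equiv 2 (Fin (n + 1) → ℝ)).symm ((A⁻¹).mulVec (c' : Fin (n + 1) → ℝ))‖ ≤ ‖c'‖ := by
        have h := l_mul_le n A l hl ((WithLp.equiv 2 (Fin (n + 1) → ℝ)).symm ((A⁻¹).mulVec (c' : Fin (n + 1) → ℝ)))
        rwa [harg] at h
      set W := ‖(WithLp.equiv 2 (Fin (n + 1) → ℝ)).symm ((A⁻¹).mulVec (c' : Fin (n + 1) → ℝ))‖ with hW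
      have hc'pos : 0 < ‖c'‖ := norm_pos_iff.mpr hc'0
      have e1 : l * ‖c'‖ ^ 2 ≤ |A.det| * ‖c‖ * (l * W) := by nlinarith [h6]
      have e2 : |A.det| * ‖c‖ * (l * W) ≤ |A.det| * ‖c'‖ * ‖c‖ := by
        calc |A.det| * ‖c‖ * (l * W) = (|A.det| * ‖c‖) * (l * W) := by ring
        _ ≤ (|A.det| * ‖c‖) * ‖c'‖ :=
            mul_le_mul_of_nonneg_left h7 (mul_nonneg (abs_nonneg A.det) (norm_nonneg c))
        _ = |A.det| * ‖c'‖ * ‖c‖ := by ring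
      have e3 : |A.det| * ‖c'‖ * ‖c‖ ≤ (l * O ^ n) * ‖c'‖ * ‖c‖ :=
        mul_le_mul_of_nonneg_right (mul_le_mul_of_nonneg_right haux (norm_nonneg c')) (norm_nonneg c)
      nlinarith [e1, e2, e3, mul_pos hlpos hc'pos]
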